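/- For each time step t, the loss ℓ_t = Σ_{i≤j} σ(i,j)(b̂_t(i,j) - b(i,j))(δ_t(i)y_t(j) + δ_t(j)y_t(i)) is non-negative, where δ_t = ŝ_t - s_t, ŝ_t = μ(y_t; b̂_t) and s_t = μ(y_t; b). -/
import Mathlib


open Finset

/-- The PCS objective: `∑_{i ≤ j} σ(i,j) c(i,j) (s(i) y(j) + s(j) y(i))`,
where `σ(i,j) = 1` if `i = j` and `-1` otherwise. -/
noncomputable def pcsObj {n : ℕ} (c : Fin n → Fin n → ℝ) (y : Fin n → ℝ)
    (s : Fin n → ℝ) : ℝ :=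
  ∑ i : Fin n, ∑ j : Fin n, if i ≤ j then
    (if i = j then (1 : ℝ) else -1) * c i j * (s i * y j + s j * y i) else 0

/-- the loss ℓ_t is non-negative. -/
theorem stmt0 {n : ℕ} (hn : 1 ≤ n) (S : Finset (Fin n → ℕ)) (hS : S.Nonempty)
    (y : Fin n → ℝ) (hy : ∀ i, 0 ≤ y i)
    (b bhat : Fin n → Fin n → ℝ)
    (st sht : Fin n → ℕ) (hst : st ∈ S) (hsht : sht ∈ S)
    (hstOpt : ∀ s ∈ S,
      pcsObj b y (fun i => (s i : ℝ)) ≤ pcsObj b y (fun i => (st i : ℝ)))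
    (hshtOpt : ∀ s ∈ S,
      pcsObj bhat y (fun i => (s i : ℝ)) ≤ pcsObj bhat y (fun i => (sht i : ℝ))) :
    0 ≤ ∑ i : Fin n, ∑ j : Fin n, if i ≤ j then
      (if i = j then (1 : ℝ) else -1) * (bhat i j - b i j) *
        ((((sht i : ℝ) - st i)) * y j + (((sht j : ℝ) - st j)) * y i) else 0 := by
  have key : (∑ i : Fin n, ∑ j : Fin n, if i ≤ j then
      (if i = j then (1 : ℝ) else -1) * (bhat i j - b i j) *
        ((((sht i : ℝ) - st i)) * y j + (((sht j : ℝ) - st j)) * y i) else 0)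
      = (pcsObj bhat y (fun i => (sht i : ℝ)) - pcsObj bhat y (fun i => (st i : ℝ)))
        + (pcsObj b y (fun i => (st i : ℝ)) - pcsObj b y (fun i => (sht i : ℝ))) := by
    simp only [pcsObj, ← Finset.sum_sub_distrib, ← Finset.sum_add_distrib]
    refine Finset.sum_congr rfl fun i _ => Finset.sum_congr rfl fun j _ => ?_
    split_ifs <;> ring
  rw [key]
  linarith [hstOpt sht hsht, hshtOpt st hst]
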